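/- Let M be a positive integer, χ a primitive Dirichlet character modulo M, q a positive integer with gcd(q, M) = 1, and k an integer. Then Σ_{b=1}^{Mq} χ(b) e^{2πibk/(Mq)} = q χ(q) χ̄(k) τ(χ) if q divides k, and the sum equals 0 otherwise. -/

import Mathlib

/-- The Gauss sum `τ(χ) = ∑_{b=1}^{M} χ(b) e^{2πib/M}`. -/
noncomputable def gaussSumExp (M : ℕ) (χ : DirichletCharacter ℂ M) : ℂ :=
  ∑ b ∈ Finset.Icc 1 M, χ (b : ZMod M) * Complex.exp (2 * Real.pi * Complex.I * b / M)

/-- Shift a sum over `Icc 1 n` to a sum over `range n` when the summand is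
"periodic" at the endpoints. -/
lemma sum_Icc_one_eq_sum_range {n : ℕ} (f : ℕ → ℂ) (h : f n = f 0) :
    ∑ b ∈ Finset.Icc 1 n, f b = ∑ b ∈ Finset.range n, f b := by
  have h1 : Finset.Icc 1 n = Finset.Ico 1 (n + 1) := by
    rw [Finset.Ico_add_one_right_eq_Icc]
  have h2 : ∑ b ∈ Finset.Ico 0 (n + 1), f b = f 0 + ∑ b ∈ Finset.Ico 1 (n + 1), f b :=
    Finset.sum_eq_sum_Ico_succ_bot (Nat.succ_pos n) f
  have h3 : ∑ b ∈ Finset.Ico 0 (n + 1), f b = (∑ b ∈ Finset.Ico 0 n, f b) + f n :=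
    Finset.sum_Ico_succ_top (Nat.zero_le n) f
  have h4 : Finset.range n = Finset.Ico 0 n := by rw [Finset.range_eq_Ico]
  rw [h1, h4]
  have h5 : f 0 + ∑ b ∈ Finset.Ico 1 (n + 1), f b = f 0 + ∑ b ∈ Finset.Ico 0 n, f b := by
    rw [← h2, h3, h]; ring
  exact add_left_cancel h5

/-- A sum over `range M` of a function of the residue class equals the sum over `ZMod M`. -/
lemma sum_range_eq_sum_zmod {M : ℕ} [NeZero M] (g : ZMod M → ℂ) :
    ∑ r ∈ Finset.range M, g (r : ZMod M) = ∑ x : ZMod M, g x := by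
  refine Finset.sum_nbij' (f := fun r : ℕ ↦ g (r : ZMod M)) (g := g)
    (fun r ↦ (r : ZMod M)) (fun x ↦ x.val) ?_ ?_ ?_ ?_ ?_
  · intro r _; exact Finset.mem_univ _
  · intro x _; exact Finset.mem_range.mpr (ZMod.val_lt x)
  · intro r hr; exact ZMod.val_natCast_of_lt (Finset.mem_range.mp hr)
  · intro x _; exact ZMod.natCast_zmod_val x
  · intro r _; rfl

/-- Evaluation of the complete twisted exponential sum modulo `Mq`: for a primitive
character `χ mod M` and `gcd(q,M)=1`,
`∑_{b=1}^{Mq} χ(b) e^{2πibk/(Mq)} = qχ(q)χ̄(k)τ(χ)` if `q ∣ k`, and `0` otherwise. -/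
theorem complete_character_sum_eval
    (M q : ℕ) (hM : 0 < M) (hq : 0 < q)
    (χ : DirichletCharacter ℂ M) (hχ : χ.IsPrimitive)
    (hqM : Nat.gcd q M = 1) (k : ℤ) :
    (∑ b ∈ Finset.Icc 1 (M * q),
        χ (b : ZMod M) * Complex.exp (2 * Real.pi * Complex.I * b * k / (M * q))) =
      if (q : ℤ) ∣ k then
        (q : ℂ) * χ (q : ZMod M) * (starRingEnd ℂ) (χ (k : ZMod M)) * gaussSumExp M χ
      else 0 := by
  haveI : NeZero M := ⟨hM.ne'⟩
  have hMC : (M : ℂ) ≠ 0 := Nat.cast_ne_zero.mpr hM.ne'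
  have hqC : (q : ℂ) ≠ 0 := Nat.cast_ne_zero.mpr hq.ne'
  have hne2πI : (2 * (Real.pi : ℂ) * Complex.I) ≠ 0 := by
    simp [Real.pi_ne_zero, Complex.I_ne_zero]
  -- Step 1: convert `Icc 1 (M*q)` to `range (M*q)`.
  have hper : (fun b : ℕ ↦ χ (b : ZMod M) *
      Complex.exp (2 * Real.pi * Complex.I * b * k / (M * q))) (M * q)
      = (fun b : ℕ ↦ χ (b : ZMod M) *
      Complex.exp (2 * Real.pi * Complex.I * b * k / (M * q))) 0 := by
    simp only
    have e1 : ((M * q : ℕ) : ZMod M) = ((0 : ℕ) : ZMod M) := by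
      push_cast [ZMod.natCast_self]; ring
    have e2 : (2 * Real.pi * Complex.I * ((M * q : ℕ) : ℂ) * k / ((M : ℂ) * q))
        = (k : ℂ) * (2 * Real.pi * Complex.I) := by
      push_cast; field_simp
    rw [e1, e2, Complex.exp_int_mul_two_pi_mul_I]
    norm_num
  rw [sum_Icc_one_eq_sum_range _ hper]
  -- Step 2: reindex `range (M*q)` by `range M ×ˢ range q`, `b = r + M*t`.
  have hsplit : ∑ b ∈ Finset.range (M * q),
      χ (b : ZMod M) * Complex.exp (2 * Real.pi * Complex.I * b * k / (M * q))
      = ∑ p ∈ Finset.range M ×ˢ Finset.range q,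
      χ ((p.1 + M * p.2 : ℕ) : ZMod M) *
        Complex.exp (2 * Real.pi * Complex.I * (p.1 + M * p.2 : ℕ) * k / (M * q)) := by
    refine Finset.sum_nbij' (fun b ↦ (b % M, b / M)) (fun p ↦ p.1 + M * p.2) ?_ ?_ ?_ ?_ ?_
    · intro b hb
      rw [Finset.mem_range] at hb
      refine Finset.mem_product.mpr ⟨Finset.mem_range.mpr (Nat.mod_lt _ hM),
        Finset.mem_range.mpr ?_⟩
      rw [Nat.div_lt_iff_lt_mul hM]
      exact lt_of_lt_of_eq hb (Nat.mul_comm M q)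
    · intro p hp
      obtain ⟨h1, h2⟩ := Finset.mem_product.mp hp
      rw [Finset.mem_range] at h1 h2 ⊢
      calc p.1 + M * p.2 < M + M * p.2 := by omega
        _ = M * (p.2 + 1) := by ring
        _ ≤ M * q := Nat.mul_le_mul_left M h2
    · intro b _
      exact Nat.mod_add_div b M
    · intro p hp
      obtain ⟨h1, _⟩ := Finset.mem_product.mp hp
      rw [Finset.mem_range] at h1
      have e1 : (p.1 + M * p.2) % M = p.1 := by
        rw [Nat.add_mul_mod_self_left, Nat.mod_eq_of_lt h1]
      have e2 : (p.1 + M * p.2) / M = p.2 := by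
        rw [Nat.add_mul_div_left _ _ hM, Nat.div_eq_of_lt h1, Nat.zero_add]
      exact Prod.ext e1 e2
    · intro b _
      rw [Nat.mod_add_div b M]
  rw [hsplit, Finset.sum_product]
  -- Step 3: factor each term.
  have hterm : ∀ r ∈ Finset.range M, ∀ t ∈ Finset.range q,
      χ ((r + M * t : ℕ) : ZMod M) *
        Complex.exp (2 * Real.pi * Complex.I * (r + M * t : ℕ) * k / (M * q))
      = (χ (r : ZMod M) * Complex.exp (2 * Real.pi * Complex.I * r * k / (M * q))) *
        Complex.exp (2 * Real.pi * Complex.I * t * k / q) := by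
    intro r _ t _
    have e1 : ((r + M * t : ℕ) : ZMod M) = (r : ZMod M) := by
      push_cast [ZMod.natCast_self]; ring
    have e2 : (2 * Real.pi * Complex.I * ((r + M * t : ℕ) : ℂ) * k / ((M : ℂ) * q))
        = 2 * Real.pi * Complex.I * r * k / ((M : ℂ) * q)
          + 2 * Real.pi * Complex.I * t * k / q := by
      push_cast; field_simp
    rw [e1, e2, Complex.exp_add]; ring
  have hfact : ∑ r ∈ Finset.range M, ∑ t ∈ Finset.range q,
      χ ((r + M * t : ℕ) : ZMod M) *
        Complex.exp (2 * Real.pi * Complex.I * (r + M * t : ℕ) * k / (M * q))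
      = (∑ r ∈ Finset.range M,
          χ (r : ZMod M) * Complex.exp (2 * Real.pi * Complex.I * r * k / (M * q))) *
        (∑ t ∈ Finset.range q, Complex.exp (2 * Real.pi * Complex.I * t * k / q)) := by
    rw [Finset.sum_mul_sum]
    exact Finset.sum_congr rfl fun r hr ↦ Finset.sum_congr rfl fun t ht ↦ hterm r hr t ht
  rw [hfact]
  by_cases hdvd : (q : ℤ) ∣ k
  · -- divisible case
    rw [if_pos hdvd]
    obtain ⟨m, hm⟩ := hdvd
    -- inner geometric sum equals q
    have hG : ∑ t ∈ Finset.range q, Complex.exp (2 * Real.pi * Complex.I * t * k / q)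
        = (q : ℂ) := by
      have h1 : ∀ t ∈ Finset.range q,
          Complex.exp (2 * Real.pi * Complex.I * t * k / q) = 1 := by
        intro t _
        have e3 : (2 * Real.pi * Complex.I * t * k / (q : ℂ))
            = ((t * m : ℤ) : ℂ) * (2 * Real.pi * Complex.I) := by
          rw [hm]; push_cast; field_simp
        rw [e3, Complex.exp_int_mul_two_pi_mul_I]
      rw [Finset.sum_congr rfl h1, Finset.sum_const, Finset.card_range, nsmul_eq_mul, mul_one]
    rw [hG]
    -- main sum is a shifted Gauss sum
    have hS1 : ∑ r ∈ Finset.range M,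
        χ (r : ZMod M) * Complex.exp (2 * Real.pi * Complex.I * r * k / (M * q))
        = χ⁻¹ ((m : ZMod M)) * gaussSum χ (ZMod.stdAddChar (N := M)) := by
      have hterm2 : ∀ r ∈ Finset.range M,
          χ (r : ZMod M) * Complex.exp (2 * Real.pi * Complex.I * r * k / ((M : ℂ) * q))
          = χ (r : ZMod M) * ZMod.stdAddChar ((m : ZMod M) * (r : ZMod M)) := by
        intro r _
        congr 1
        have e4 : ((m : ZMod M) * (r : ZMod M)) = (((m * r : ℤ)) : ZMod M) := by
          push_cast; ring
        rw [e4, ZMod.stdAddChar_coe]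
        congr 1
        rw [hm]; push_cast; field_simp
      rw [Finset.sum_congr rfl hterm2,
        sum_range_eq_sum_zmod (fun x ↦ χ x * ZMod.stdAddChar ((m : ZMod M) * x)),
        ← gaussSum_mulShift_of_isPrimitive (ZMod.stdAddChar (N := M)) hχ (m : ZMod M)]
      simp only [gaussSum, AddChar.mulShift_apply]
    rw [hS1]
    -- the Gauss sum in exponential form
    have hperM : (fun b : ℕ ↦ χ (b : ZMod M) *
        Complex.exp (2 * Real.pi * Complex.I * b / M)) M
        = (fun b : ℕ ↦ χ (b : ZMod M) *
        Complex.exp (2 * Real.pi * Complex.I * b / M)) 0 := by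
      simp only
      have e1 : ((M : ℕ) : ZMod M) = ((0 : ℕ) : ZMod M) := by
        push_cast [ZMod.natCast_self]; ring
      have e2 : (2 * Real.pi * Complex.I * ((M : ℕ) : ℂ) / (M : ℂ))
          = ((1 : ℤ) : ℂ) * (2 * Real.pi * Complex.I) := by
        push_cast; field_simp
      rw [e1, e2, Complex.exp_int_mul_two_pi_mul_I]
      norm_num
    have hτ : gaussSumExp M χ = gaussSum χ (ZMod.stdAddChar (N := M)) := by
      rw [gaussSumExp, sum_Icc_one_eq_sum_range _ hperM]
      have hterm3 : ∀ r ∈ Finset.range M,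
          χ (r : ZMod M) * Complex.exp (2 * Real.pi * Complex.I * r / M)
          = χ (r : ZMod M) * ZMod.stdAddChar ((r : ZMod M)) := by
        intro r _
        congr 1
        have e4 : ((r : ZMod M)) = (((r : ℤ)) : ZMod M) := by push_cast; ring
        rw [e4, ZMod.stdAddChar_coe]
        norm_num
      rw [Finset.sum_congr rfl hterm3,
        sum_range_eq_sum_zmod (fun x ↦ χ x * ZMod.stdAddChar x)]
      rfl
    rw [hτ]
    -- identify χ̄(k) with χ⁻¹(q) χ⁻¹(m) etc.
    have hu : IsUnit ((q : ℕ) : ZMod M) :=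
      (ZMod.isUnit_iff_coprime q M).mpr hqM
    have hqinv : χ ((q : ℕ) : ZMod M) * χ⁻¹ ((q : ℕ) : ZMod M) = 1 := by
      have h5 : (χ * χ⁻¹) ((q : ℕ) : ZMod M) = 1 := by
        rw [mul_inv_cancel χ]; exact MulChar.one_apply hu
      calc χ ((q : ℕ) : ZMod M) * χ⁻¹ ((q : ℕ) : ZMod M)
          = (χ * χ⁻¹) ((q : ℕ) : ZMod M) := by
            simp only [MulChar.coeToFun_mul, Pi.mul_apply]
        _ = 1 := h5
    have hkm : ((k : ℤ) : ZMod M) = ((q : ℕ) : ZMod M) * ((m : ℤ) : ZMod M) := by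
      rw [hm]; push_cast; ring
    have hconj : (starRingEnd ℂ) (χ ((k : ℤ) : ZMod M))
        = χ⁻¹ ((q : ℕ) : ZMod M) * χ⁻¹ ((m : ℤ) : ZMod M) := by
      rw [hkm, map_mul, map_mul]
      rw [show (starRingEnd ℂ) (χ ((q : ℕ) : ZMod M)) = star (χ ((q : ℕ) : ZMod M)) from rfl,
        show (starRingEnd ℂ) (χ ((m : ℤ) : ZMod M)) = star (χ ((m : ℤ) : ZMod M)) from rfl,
        MulChar.star_apply', MulChar.star_apply']
    rw [hconj]
    linear_combination (-(q : ℂ) * χ⁻¹ ((m : ℤ) : ZMod M)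
      * gaussSum χ (ZMod.stdAddChar (N := M))) * hqinv
  · -- non-divisible case: the geometric sum vanishes
    rw [if_neg hdvd]
    have hG : ∑ t ∈ Finset.range q, Complex.exp (2 * Real.pi * Complex.I * t * k / q) = 0 := by
      set z := Complex.exp (2 * Real.pi * Complex.I * k / q) with hz
      have hzt : ∀ t ∈ Finset.range q,
          Complex.exp (2 * Real.pi * Complex.I * t * k / q) = z ^ t := by
        intro t _
        rw [hz, ← Complex.exp_nat_mul]
        congr 1
        field_simp
      have hz1 : z ≠ 1 := by
        intro h1
        rcases Complex.exp_eq_one_iff.mp h1 with ⟨n, hn⟩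
        have h2 : (k : ℂ) = n * q := by
          rw [div_eq_iff hqC] at hn
          refine mul_left_cancel₀ hne2πI ?_
          rw [hn]; ring
        have h3 : k = n * q := by exact_mod_cast h2
        exact hdvd ⟨n, by rw [h3]; ring⟩
      have hzq : z ^ q = 1 := by
        rw [hz, ← Complex.exp_nat_mul]
        have e5 : (q : ℂ) * (2 * Real.pi * Complex.I * k / q)
            = (k : ℂ) * (2 * Real.pi * Complex.I) := by field_simp
        rw [e5, Complex.exp_int_mul_two_pi_mul_I]
      rw [Finset.sum_congr rfl hzt, geom_sum_eq hz1, hzq, sub_self, zero_div]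
    rw [hG, mul_zero]
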